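/- (Hoffman–Wielandt inequality) Let A and E be real symmetric (n+1)×(n+1) matrices, and for a real symmetric (n+1)×(n+1) matrix B let λ_0(B) ≥ λ_1(B) ≥ ⋯ ≥ λ_n(B) denote its eigenvalues listed in decreasing order (with multiplicity). Then Σ_{k=0}^{n} (λ_k(A+E) − λ_k(A))² ≤ ‖E‖_F². -/

import Mathlib

open Matrix Finset

/-- The spectral norm (operator 2-norm) of a real square matrix. -/
noncomputable def spec {M : ℕ} (A : Matrix (Fin M) (Fin M) ℝ) : ℝ :=
  ‖LinearMap.toContinuousLinearMap (Matrix.toEuclideanLin A)‖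

/-- The squared Frobenius norm of a real matrix. -/
noncomputable def frobSq {m l : ℕ} (A : Matrix (Fin m) (Fin l) ℝ) : ℝ :=
  ∑ i, ∑ j, (A i j) ^ 2

/-- The squared Euclidean norm of a real vector. -/
noncomputable def vecNormSq {M : ℕ} (x : Fin M → ℝ) : ℝ := ∑ i, (x i) ^ 2

/-- The Euclidean norm of a real vector. -/
noncomputable def vecNorm {M : ℕ} (x : Fin M → ℝ) : ℝ := Real.sqrt (∑ i, (x i) ^ 2)

/-- The M×(n+1) matrix whose columns are the vectors `v 0, …, v n`. -/
noncomputable def colMat {M n : ℕ} (v : Fin (n + 1) → Fin M → ℝ) :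
    Matrix (Fin M) (Fin (n + 1)) ℝ :=
  Matrix.of fun i k => v k i


noncomputable def Xind {n : ℕ} (p : ℕ) (i : Fin (n+1)) : ℝ := if (i:ℕ) ≤ p then 1 else 0

lemma Xind_nonneg {n p : ℕ} (i : Fin (n+1)) : 0 ≤ Xind p i := by
  unfold Xind; split <;> norm_num

lemma Xind_le_one {n p : ℕ} (i : Fin (n+1)) : Xind p i ≤ 1 := by
  unfold Xind; split <;> norm_num

lemma sum_Xind {n : ℕ} {p : ℕ} (hp : p < n + 1) :
    ∑ k : Fin (n+1), Xind p k = (p : ℝ) + 1 := by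
  unfold Xind
  rw [Fin.sum_univ_eq_sum_range (fun k => if k ≤ p then (1:ℝ) else 0)]
  rw [Finset.sum_boole]
  have : Finset.filter (fun k => k ≤ p) (Finset.range (n+1)) = Finset.range (p+1) := by
    ext k; simp [Finset.mem_range]; omega
  rw [this, Finset.card_range]
  push_cast; ring

noncomputable def Bform {n : ℕ} (S : Matrix (Fin (n+1)) (Fin (n+1)) ℝ)
    (u v : Fin (n+1) → ℝ) : ℝ :=
  (∑ i, ∑ j, u i * v j * S i j) - ∑ k, u k * v k

lemma Bform_X_X {n : ℕ} (S : Matrix (Fin (n+1)) (Fin (n+1)) ℝ)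
    (hS : ∀ i j, 0 ≤ S i j) (hrow : ∀ i, ∑ j, S i j = 1) (hcol : ∀ j, ∑ i, S i j = 1)
    {p q : ℕ} (hp : p < n + 1) (hq : q < n + 1) :
    Bform S (Xind p) (Xind q) ≤ 0 := by
  have hdiag : ∑ k : Fin (n+1), Xind p k * Xind q k = ((min p q : ℕ) : ℝ) + 1 := by
    have hk : ∀ k : Fin (n+1), Xind p k * Xind q k = Xind (min p q) k := by
      intro k; unfold Xind
      rcases le_or_gt (k:ℕ) (min p q) with h | h
      · rw [if_pos (le_trans h (min_le_left _ _)), if_pos (le_trans h (min_le_right _ _)),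
          if_pos h, one_mul]
      · rw [if_neg (by omega : ¬ ((k:ℕ) ≤ min p q))]
        rcases (by omega : ¬ ((k:ℕ) ≤ p) ∨ ¬ ((k:ℕ) ≤ q)) with h' | h'
        · rw [if_neg h', zero_mul]
        · rw [if_neg h', mul_zero]
    rw [Finset.sum_congr rfl fun k _ => hk k]
    exact sum_Xind (by omega)
  have hub : ∑ i, ∑ j, Xind p i * Xind q j * S i j ≤ ((min p q : ℕ) : ℝ) + 1 := by
    rcases le_total p q with hpq | hpq
    · have hmin : min p q = p := min_eq_left hpq
      calc ∑ i, ∑ j, Xind p i * Xind q j * S i j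
          ≤ ∑ i, ∑ j, Xind p i * S i j := by
            refine Finset.sum_le_sum fun i _ => Finset.sum_le_sum fun j _ => ?_
            have h1 : Xind q j * S i j ≤ 1 * S i j :=
              mul_le_mul_of_nonneg_right (Xind_le_one j) (hS i j)
            calc Xind p i * Xind q j * S i j = Xind p i * (Xind q j * S i j) := by ring
              _ ≤ Xind p i * (1 * S i j) :=
                  mul_le_mul_of_nonneg_left (by simpa using h1) (Xind_nonneg i)
              _ = Xind p i * S i j := by ring
        _ = ∑ i, Xind p i * ∑ j, S i j := by
            exact Finset.sum_congr rfl fun i _ => (Finset.mul_sum _ _ _).symm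
        _ = (p : ℝ) + 1 := by
            rw [Finset.sum_congr rfl fun i _ => by rw [hrow i, mul_one]]
            exact sum_Xind hp
        _ = ((min p q : ℕ) : ℝ) + 1 := by rw [hmin]
    · have hmin : min p q = q := min_eq_right hpq
      calc ∑ i, ∑ j, Xind p i * Xind q j * S i j
          = ∑ j, ∑ i, Xind p i * Xind q j * S i j := Finset.sum_comm
        _ ≤ ∑ j, ∑ i, Xind q j * S i j := by
            refine Finset.sum_le_sum fun j _ => Finset.sum_le_sum fun i _ => ?_
            have h1 : Xind p i * S i j ≤ 1 * S i j :=
              mul_le_mul_of_nonneg_right (Xind_le_one i) (hS i j)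
            calc Xind p i * Xind q j * S i j = Xind q j * (Xind p i * S i j) := by ring
              _ ≤ Xind q j * (1 * S i j) :=
                  mul_le_mul_of_nonneg_left (by simpa using h1) (Xind_nonneg j)
              _ = Xind q j * S i j := by ring
        _ = ∑ j, Xind q j * ∑ i, S i j := by
            exact Finset.sum_congr rfl fun j _ => (Finset.mul_sum _ _ _).symm
        _ = (q : ℝ) + 1 := by
            rw [Finset.sum_congr rfl fun j _ => by rw [hcol j, mul_one]]
            exact sum_Xind hq
        _ = ((min p q : ℕ) : ℝ) + 1 := by rw [hmin]
  unfold Bform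
  rw [hdiag]
  linarith


lemma Bform_add_left {n : ℕ} (S : Matrix (Fin (n+1)) (Fin (n+1)) ℝ)
    (u u' v : Fin (n+1) → ℝ) :
    Bform S (fun i => u i + u' i) v = Bform S u v + Bform S u' v := by
  simp only [Bform, add_mul, Finset.sum_add_distrib]; ring

lemma Bform_add_right {n : ℕ} (S : Matrix (Fin (n+1)) (Fin (n+1)) ℝ)
    (u v v' : Fin (n+1) → ℝ) :
    Bform S u (fun j => v j + v' j) = Bform S u v + Bform S u v' := by
  simp only [Bform, mul_add, add_mul, Finset.sum_add_distrib]; ring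

lemma Bform_zero_left {n : ℕ} (S : Matrix (Fin (n+1)) (Fin (n+1)) ℝ)
    (v : Fin (n+1) → ℝ) : Bform S (fun _ => 0) v = 0 := by
  simp [Bform]

lemma Bform_zero_right {n : ℕ} (S : Matrix (Fin (n+1)) (Fin (n+1)) ℝ)
    (u : Fin (n+1) → ℝ) : Bform S u (fun _ => 0) = 0 := by
  simp [Bform]

lemma Bform_smul_left {n : ℕ} (S : Matrix (Fin (n+1)) (Fin (n+1)) ℝ)
    (c : ℝ) (u v : Fin (n+1) → ℝ) :
    Bform S (fun i => c * u i) v = c * Bform S u v := by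
  simp only [Bform, mul_sub, Finset.mul_sum]
  congr 1 <;> refine Finset.sum_congr rfl fun i _ => ?_
  · exact Finset.sum_congr rfl fun j _ => by ring
  · ring

lemma Bform_smul_right {n : ℕ} (S : Matrix (Fin (n+1)) (Fin (n+1)) ℝ)
    (c : ℝ) (u v : Fin (n+1) → ℝ) :
    Bform S u (fun j => c * v j) = c * Bform S u v := by
  simp only [Bform, mul_sub, Finset.mul_sum]
  congr 1 <;> refine Finset.sum_congr rfl fun i _ => ?_
  · exact Finset.sum_congr rfl fun j _ => by ring
  · ring

lemma Bform_sum_left {n : ℕ} (S : Matrix (Fin (n+1)) (Fin (n+1)) ℝ)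
    (s : Finset ℕ) (f : ℕ → Fin (n+1) → ℝ) (v : Fin (n+1) → ℝ) :
    Bform S (fun i => ∑ p ∈ s, f p i) v = ∑ p ∈ s, Bform S (f p) v := by
  induction s using Finset.cons_induction with
  | empty => simpa using Bform_zero_left S v
  | cons a s ha ih =>
      simp only [Finset.sum_cons]
      rw [Bform_add_left]
      rw [ih]

lemma Bform_sum_right {n : ℕ} (S : Matrix (Fin (n+1)) (Fin (n+1)) ℝ)
    (s : Finset ℕ) (u : Fin (n+1) → ℝ) (f : ℕ → Fin (n+1) → ℝ) :
    Bform S u (fun j => ∑ p ∈ s, f p j) = ∑ p ∈ s, Bform S u (f p) := by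
  induction s using Finset.cons_induction with
  | empty => simpa using Bform_zero_right S u
  | cons a s ha ih =>
      simp only [Finset.sum_cons]
      rw [Bform_add_right]
      rw [ih]
lemma Bform_one_one {n : ℕ} (S : Matrix (Fin (n+1)) (Fin (n+1)) ℝ)
    (hrow : ∀ i, ∑ j, S i j = 1) : Bform S (fun _ => 1) (fun _ => 1) = 0 := by
  simp [Bform, hrow]

lemma Bform_one_left {n : ℕ} (S : Matrix (Fin (n+1)) (Fin (n+1)) ℝ)
    (hcol : ∀ j, ∑ i, S i j = 1) (v : Fin (n+1) → ℝ) : Bform S (fun _ => 1) v = 0 := by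
  unfold Bform
  rw [Finset.sum_comm]
  have : ∀ j : Fin (n+1), ∑ i, (1:ℝ) * v j * S i j = v j := by
    intro j
    rw [show (∑ i, (1:ℝ) * v j * S i j) = v j * ∑ i, S i j by
      rw [Finset.mul_sum]; exact Finset.sum_congr rfl fun i _ => by ring]
    rw [hcol j, mul_one]
  rw [Finset.sum_congr rfl fun j _ => this j]
  simp

lemma Bform_one_right {n : ℕ} (S : Matrix (Fin (n+1)) (Fin (n+1)) ℝ)
    (hrow : ∀ i, ∑ j, S i j = 1) (u : Fin (n+1) → ℝ) : Bform S u (fun _ => 1) = 0 := by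
  unfold Bform
  have : ∀ i : Fin (n+1), ∑ j, u i * (1:ℝ) * S i j = u i := by
    intro i
    rw [show (∑ j, u i * (1:ℝ) * S i j) = u i * ∑ j, S i j by
      rw [Finset.mul_sum]; exact Finset.sum_congr rfl fun j _ => by ring]
    rw [hrow i, mul_one]
  rw [Finset.sum_congr rfl fun i _ => this i]
  simp

lemma Xind_last {n : ℕ} : (Xind n : Fin (n+1) → ℝ) = fun _ => 1 := by
  funext i; simp [Xind, Fin.is_le]

noncomputable def aExt {n : ℕ} (a : Fin (n+1) → ℝ) (p : ℕ) : ℝ := a ⟨min p n, by omega⟩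

noncomputable def dCoef {n : ℕ} (a : Fin (n+1) → ℝ) (p : ℕ) : ℝ :=
  aExt a p - (if p < n then aExt a (p+1) else 0)

lemma dCoef_nonneg {n : ℕ} (a : Fin (n+1) → ℝ) (ha : Antitone a) {p : ℕ} (hp : p < n) :
    0 ≤ dCoef a p := by
  unfold dCoef aExt
  rw [if_pos hp]
  have h : a ⟨min (p+1) n, by omega⟩ ≤ a ⟨min p n, by omega⟩ := by
    apply ha
    simp only [Fin.mk_le_mk]
    omega
  linarith

lemma decomp {n : ℕ} (a : Fin (n+1) → ℝ) (i : Fin (n+1)) :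
    a i = ∑ p ∈ Finset.range (n+1), dCoef a p * Xind p i := by
  rw [Finset.sum_range_succ]
  have h1 : Xind n i = 1 := by simp [Xind, Fin.is_le]
  rw [h1, mul_one]
  have h2 : dCoef a n = aExt a n := by simp [dCoef]
  rw [h2]
  have h3 : ∀ p ∈ Finset.range n, dCoef a p * Xind p i
      = if (i:ℕ) ≤ p then aExt a p - aExt a (p+1) else 0 := by
    intro p hp
    rw [Finset.mem_range] at hp
    unfold dCoef Xind
    rw [if_pos hp]
    split_ifs <;> ring
  rw [Finset.sum_congr rfl h3, ← Finset.sum_filter]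
  have h4 : Finset.filter (fun p => (i:ℕ) ≤ p) (Finset.range n) = Finset.Ico (i:ℕ) n := by
    ext x; simp only [Finset.mem_filter, Finset.mem_range, Finset.mem_Ico]; omega
  rw [h4]
  have h5 : ∑ p ∈ Finset.Ico (i:ℕ) n, (aExt a p - aExt a (p+1)) = aExt a i - aExt a n := by
    rw [Finset.sum_Ico_eq_sub _ (Fin.is_le i)]
    rw [Finset.sum_range_sub' (fun p => aExt a p), Finset.sum_range_sub' (fun p => aExt a p)]
    ring
  rw [h5]
  have h6 : aExt a (i:ℕ) = a i := by
    unfold aExt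
    congr 1
    exact Fin.ext (by simp [Nat.min_eq_left (Fin.is_le i)])
  rw [h6]; ring

lemma ds_key {n : ℕ} (a b : Fin (n+1) → ℝ) (ha : Antitone a) (hb : Antitone b)
    (S : Matrix (Fin (n+1)) (Fin (n+1)) ℝ) (hS : ∀ i j, 0 ≤ S i j)
    (hrow : ∀ i, ∑ j, S i j = 1) (hcol : ∀ j, ∑ i, S i j = 1) :
    ∑ i, ∑ j, a i * b j * S i j ≤ ∑ k, a k * b k := by
  suffices h : Bform S a b ≤ 0 by
    unfold Bform at h; linarith
  have e1 : Bform S a b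
      = ∑ p ∈ Finset.range (n+1), dCoef a p * Bform S (Xind p) b := by
    have : Bform S a b
        = Bform S (fun i => ∑ p ∈ Finset.range (n+1), dCoef a p * Xind p i) b := by
      congr 1
      exact funext (decomp a)
    rw [this, Bform_sum_left S _ _ b]
    exact Finset.sum_congr rfl fun p _ => Bform_smul_left S _ _ b
  have e2 : ∀ p, Bform S (Xind p) b
      = ∑ q ∈ Finset.range (n+1), dCoef b q * Bform S (Xind p) (Xind q) := by
    intro p
    have : Bform S (Xind p) b
        = Bform S (Xind p) (fun j => ∑ q ∈ Finset.range (n+1), dCoef b q * Xind q j) := by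
      congr 1
      exact funext (decomp b)
    rw [this, Bform_sum_right S _ _ _]
    exact Finset.sum_congr rfl fun q _ => Bform_smul_right S _ _ _
  rw [e1]
  have key : ∀ p ∈ Finset.range (n+1), dCoef a p * Bform S (Xind p) b ≤ 0 := by
    intro p hp
    rw [Finset.mem_range] at hp
    rcases eq_or_lt_of_le (Nat.lt_succ_iff.mp hp) with hpn | hpn
    · rw [hpn, Xind_last, Bform_one_left S hcol b, mul_zero]
    · rw [e2 p, Finset.mul_sum]
      apply Finset.sum_nonpos
      intro q hq
      rw [Finset.mem_range] at hq
      rcases eq_or_lt_of_le (Nat.lt_succ_iff.mp hq) with hqn | hqn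
      · rw [hqn, Xind_last, Bform_one_right S hrow (Xind p), mul_zero, mul_zero]
      · have h1 : 0 ≤ dCoef a p := dCoef_nonneg a ha hpn
        have h2 : 0 ≤ dCoef b q := dCoef_nonneg b hb hqn
        have h3 : Bform S (Xind p) (Xind q) ≤ 0 :=
          Bform_X_X S hS hrow hcol (by omega) (by omega)
        exact mul_nonpos_of_nonneg_of_nonpos h1 (mul_nonpos_of_nonneg_of_nonpos h2 h3)
  exact Finset.sum_nonpos key

lemma frobSq_eq_trace {m : ℕ} (M : Matrix (Fin m) (Fin m) ℝ) :
    frobSq M = (star M * M).trace := by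
  unfold frobSq
  simp only [Matrix.trace, Matrix.diag, Matrix.mul_apply, Matrix.star_apply, star_trivial]
  rw [Finset.sum_comm]
  exact Finset.sum_congr rfl fun i _ => Finset.sum_congr rfl fun j _ => (pow_two _)

lemma frobSq_conj {m : ℕ} (P B Q : Matrix (Fin m) (Fin m) ℝ)
    (hP : star P * P = 1) (hQ : Q * star Q = 1) :
    frobSq (P * B * Q) = frobSq B := by
  rw [frobSq_eq_trace, frobSq_eq_trace]
  have h1 : star (P * B * Q) * (P * B * Q) = star Q * ((star B * B) * Q) := by
    rw [Matrix.star_mul, Matrix.star_mul]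
    simp only [Matrix.mul_assoc]
    rw [show star P * (P * (B * Q)) = B * Q from by
      rw [← Matrix.mul_assoc, hP, Matrix.one_mul]]
  rw [h1, Matrix.trace_mul_comm, Matrix.mul_assoc, hQ, Matrix.mul_one]


set_option maxHeartbeats 1600000 in
/-- **Hoffman–Wielandt inequality.** If `A` and `E` are real symmetric
`(n+1)×(n+1)` matrices and `μA`, `μAE` are the eigenvalues of `A` and `A + E`
listed in decreasing order (with multiplicity), then
`∑ k, (λ_k(A+E) - λ_k(A))² ≤ ‖E‖_F²`. -/
theorem hoffman_wielandt {n : ℕ} (A E : Matrix (Fin (n + 1)) (Fin (n + 1)) ℝ)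
    (hA : A.IsHermitian) (hE : E.IsHermitian)
    (μA μAE : Fin (n + 1) → ℝ)
    (σA : Equiv.Perm (Fin (n + 1))) (hμA : μA = hA.eigenvalues ∘ σA) (hμA' : Antitone μA)
    (σAE : Equiv.Perm (Fin (n + 1))) (hμAE : μAE = (hA.add hE).eigenvalues ∘ σAE)
    (hμAE' : Antitone μAE) :
    ∑ k, (μAE k - μA k) ^ 2 ≤ frobSq E := by
  classical
  set ev : Fin (n+1) → ℝ := hA.eigenvalues with hev
  set ev' : Fin (n+1) → ℝ := (hA.add hE).eigenvalues with hev'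
  set U : Matrix (Fin (n+1)) (Fin (n+1)) ℝ := (hA.eigenvectorUnitary : Matrix (Fin (n+1)) (Fin (n+1)) ℝ) with hUdef
  set V : Matrix (Fin (n+1)) (Fin (n+1)) ℝ :=
    ((hA.add hE).eigenvectorUnitary : Matrix (Fin (n+1)) (Fin (n+1)) ℝ) with hVdef
  have hU1 : star U * U = 1 := Matrix.mem_unitaryGroup_iff'.mp (hA.eigenvectorUnitary).2
  have hU2 : U * star U = 1 := Matrix.mem_unitaryGroup_iff.mp (hA.eigenvectorUnitary).2
  have hV1 : star V * V = 1 := Matrix.mem_unitaryGroup_iff'.mp ((hA.add hE).eigenvectorUnitary).2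
  have hV2 : V * star V = 1 := Matrix.mem_unitaryGroup_iff.mp ((hA.add hE).eigenvectorUnitary).2
  have hAspec : A = U * Matrix.diagonal ev * star U := by
    have h := hA.spectral_theorem
    rwa [RCLike.ofReal_real_eq_id, Function.id_comp] at h
  have hAEspec : A + E = V * Matrix.diagonal ev' * star V := by
    have h := (hA.add hE).spectral_theorem
    rwa [RCLike.ofReal_real_eq_id, Function.id_comp] at h
  set W : Matrix (Fin (n+1)) (Fin (n+1)) ℝ := star V * U with hWdef
  have hW1 : W * star W = 1 := by
    rw [hWdef, Matrix.star_mul, star_star, Matrix.mul_assoc, ← Matrix.mul_assoc U, hU2,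
      Matrix.one_mul, hV1]
  have hW2 : star W * W = 1 := by
    rw [hWdef, Matrix.star_mul, star_star, Matrix.mul_assoc, ← Matrix.mul_assoc V, hV2,
      Matrix.one_mul, hU1]
  have hEeq : star V * E * U = Matrix.diagonal ev' * W - W * Matrix.diagonal ev := by
    have hE2 : E = (A + E) - A := by abel
    rw [hE2, hAEspec, hAspec, Matrix.mul_sub, Matrix.sub_mul]
    congr 1
    · simp only [Matrix.mul_assoc]
      rw [← Matrix.mul_assoc (star V) V, hV1, Matrix.one_mul]
    · simp only [Matrix.mul_assoc]
      rw [hU1, Matrix.mul_one, hWdef, Matrix.mul_assoc]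
  have hEentry : ∀ i j, (star V * E * U) i j = (ev' i - ev j) * W i j := by
    intro i j
    rw [hEeq]
    simp only [Matrix.sub_apply, Matrix.diagonal_mul, Matrix.mul_diagonal]
    ring
  have hfrob : frobSq E = ∑ i, ∑ j, (ev' i - ev j)^2 * (W i j)^2 := by
    rw [← frobSq_conj (star V) E U (by rw [star_star]; exact hV2) hU2]
    unfold frobSq
    exact Finset.sum_congr rfl fun i _ => Finset.sum_congr rfl fun j _ => by
      rw [hEentry i j]; ring
  have hrowsum : ∀ i0, ∑ j, (W i0 j)^2 = 1 := by
    intro i0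
    have h := congrFun (congrFun hW1 i0) i0
    simpa [Matrix.mul_apply, Matrix.one_apply, pow_two] using h
  have hcolsum : ∀ j0, ∑ i, (W i j0)^2 = 1 := by
    intro j0
    have h := congrFun (congrFun hW2 j0) j0
    simpa [Matrix.mul_apply, Matrix.one_apply, pow_two, mul_comm] using h
  set S : Matrix (Fin (n+1)) (Fin (n+1)) ℝ :=
    Matrix.of (fun i j => (W (σAE i) (σA j))^2) with hSdef
  have hSnn : ∀ i j, 0 ≤ S i j := fun i j => sq_nonneg _
  have hSrow : ∀ i, ∑ j, S i j = 1 := by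
    intro i
    rw [show (∑ j, S i j) = ∑ j, (W (σAE i) (σA j))^2 from rfl]
    rw [Equiv.sum_comp σA (fun j => (W (σAE i) j)^2)]
    exact hrowsum _
  have hScol : ∀ j, ∑ i, S i j = 1 := by
    intro j
    rw [show (∑ i, S i j) = ∑ i, (W (σAE i) (σA j))^2 from rfl]
    rw [Equiv.sum_comp σAE (fun i => (W i (σA j))^2)]
    exact hcolsum _
  have hfrob2 : frobSq E = ∑ i, ∑ j, (μAE i - μA j)^2 * S i j := by
    rw [hfrob]
    rw [← Equiv.sum_comp σAE (fun i => ∑ j, (ev' i - ev j)^2 * (W i j)^2)]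
    refine Finset.sum_congr rfl fun i _ => ?_
    rw [← Equiv.sum_comp σA (fun j => (ev' (σAE i) - ev j)^2 * (W (σAE i) j)^2)]
    refine Finset.sum_congr rfl fun j _ => ?_
    rw [hμA, hμAE]
    rfl
  have expand1 : ∑ k, (μAE k - μA k)^2
      = ∑ k, μAE k^2 + ∑ k, μA k^2 - 2 * ∑ k, μAE k * μA k := by
    rw [Finset.sum_congr rfl fun k _ => show (μAE k - μA k)^2
      = (μAE k^2 + μA k^2) - 2 * (μAE k * μA k) from by ring]
    rw [Finset.sum_sub_distrib, Finset.sum_add_distrib, ← Finset.mul_sum]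
  have h1 : ∑ i, ∑ j, μAE i^2 * S i j = ∑ k, μAE k ^2 := by
    refine Finset.sum_congr rfl fun i _ => ?_
    rw [← Finset.mul_sum, hSrow i, mul_one]
  have h2 : ∑ i, ∑ j, μA j^2 * S i j = ∑ k, μA k^2 := by
    rw [Finset.sum_comm]
    refine Finset.sum_congr rfl fun j _ => ?_
    rw [← Finset.mul_sum, hScol j, mul_one]
  have expand2 : ∑ i, ∑ j, (μAE i - μA j)^2 * S i j
      = ∑ k, μAE k^2 + ∑ k, μA k^2 - 2 * ∑ i, ∑ j, μAE i * μA j * S i j := by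
    rw [Finset.sum_congr rfl fun i _ => Finset.sum_congr rfl fun j _ =>
      show (μAE i - μA j)^2 * S i j
        = (μAE i^2 * S i j + μA j^2 * S i j) - 2 * (μAE i * μA j * S i j) from by ring]
    rw [Finset.sum_congr rfl fun i _ => Finset.sum_sub_distrib _ _]
    rw [Finset.sum_sub_distrib]
    rw [Finset.sum_congr rfl fun i _ => Finset.sum_add_distrib]
    rw [Finset.sum_add_distrib, h1, h2]
    congr 1
    rw [Finset.mul_sum]
    exact Finset.sum_congr rfl fun i _ => (Finset.mul_sum _ _ _).symm
  have hkey := ds_key μAE μA hμAE' hμA' S hSnn hSrow hScol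
  rw [hfrob2, expand1, expand2]
  linarith
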